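/- If two clients j, j' satisfy (1+δ')(C_j + M_j) ≤ C_{j'} + M_{j'}, and cost_j(j') ≤ C_j + M_j + (2−γ)M_{j'} + (γ−1)D_{j'}, then cost_j(j') ≤ (1 − 2δ'/(1+δ'))·C_{j'} + (3−γ)M_{j'} + (γ−1)D_{j'}. -/
import Mathlib

/-- Observation 5.2: a client at least two blocks above the center automatically
satisfies the improved rerouting bound with savings factor `2δ'/(1+δ')`. -/
theorem far_block_saving (Cj Mj Cj' Mj' Dj' γ δ' cost : ℝ)
    (hCj : 0 ≤ Cj) (hMj : Cj ≤ Mj)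
    (hC' : 0 ≤ Cj') (hCM' : Cj' ≤ Mj') (hMD' : Mj' ≤ Dj')
    (hγ1 : 1 < γ) (hγ2 : γ < 2) (hδ' : 0 < δ')
    (hcost0 : 0 ≤ cost)
    (hblock : (1 + δ') * (Cj + Mj) ≤ Cj' + Mj')
    (hcost : cost ≤ Cj + Mj + (2 - γ) * Mj' + (γ - 1) * Dj') :
    cost ≤ (1 - 2 * δ' / (1 + δ')) * Cj' + (3 - γ) * Mj' + (γ - 1) * Dj' := by
  have h1 : (0:ℝ) < 1 + δ' := by linarith
  have key : 1 - 2 * δ' / (1 + δ') = (1 - δ') / (1 + δ') := by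
    field_simp; ring
  rw [key]
  rw [← sub_nonneg]
  have h2 : (1 - δ') / (1 + δ') * Cj' + (3 - γ) * Mj' + (γ - 1) * Dj' - cost =
      ((1 - δ') * Cj' + (1 + δ') * ((3 - γ) * Mj' + (γ - 1) * Dj' - cost)) / (1 + δ') := by
    field_simp; ring
  rw [h2]
  apply div_nonneg _ h1.le
  nlinarith [mul_le_mul_of_nonneg_left hcost h1.le]
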